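/- Let D ⊆ ℂ be a nonempty open set, let φ₁, φ₂ : D → ℝ with 0 < φ₁(z) < φ₂(z) for all z ∈ D, and suppose the Hartogs domain Ω = {(z,w) ∈ ℂ² : z ∈ D and φ₁(z) < |w| < φ₂(z)} is bounded. Let d_Ω(z,w) denote the Euclidean distance from (z,w) to the boundary of Ω. Then there exists C > 0 such that for every nonzero integer n and every measurable g : D → ℂ, ∫_Ω (d_Ω(z,w))² |g(z)|² |w|^{2n} dV(z,w) ≤ (C/n²) ∫_Ω |g(z)|² |w|^{2n} dV(z,w), whenever the right-hand side is finite. (Here dV is Lebesgue measure on ℂ² ≅ ℝ⁴.) -/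

import Mathlib

open MeasureTheory

/-- The Euclidean distance (on `ℂ² ≅ ℝ⁴`) from a point `p` to the boundary of a set
`Ω ⊆ ℂ × ℂ`. -/
noncomputable def euclDistToBoundary (Ω : Set (ℂ × ℂ)) (p : ℂ × ℂ) : ℝ :=
  sInf ((fun q : ℂ × ℂ =>
    Real.sqrt (‖p.1 - q.1‖ ^ 2 + ‖p.2 - q.2‖ ^ 2)) '' frontier Ω)

open Set Filter
open scoped NNReal

noncomputable def auxF (N : ℤ) (c r : ℝ) : ℝ :=
  r ^ N * ((Real.log r - Real.log c) ^ 2 / N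
    - 2 * (Real.log r - Real.log c) / (N:ℝ) ^ 2 + 2 / (N:ℝ) ^ 3)

private lemma aux_ftc (N : ℤ) (hN : N ≠ 0) (c : ℝ) (a b : ℝ) (ha : 0 < a) (hab : a ≤ b) :
    ∫ r in a..b, (Real.log r - Real.log c) ^ 2 * r ^ (N - 1) = auxF N c b - auxF N c a := by
  have hNR : (N : ℝ) ≠ 0 := Int.cast_ne_zero.2 hN
  refine intervalIntegral.integral_eq_sub_of_hasDerivAt (fun r hr => ?_) ?_
  · rw [Set.uIcc_of_le hab] at hr
    have hr0 : 0 < r := lt_of_lt_of_le ha hr.1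
    have hlog : HasDerivAt (fun r : ℝ => Real.log r - Real.log c) r⁻¹ r := by
      simpa using (Real.hasDerivAt_log hr0.ne').sub_const (Real.log c)
    have hu : HasDerivAt (fun r : ℝ => (Real.log r - Real.log c) ^ 2 / N
        - 2 * (Real.log r - Real.log c) / (N:ℝ) ^ 2 + 2 / (N:ℝ) ^ 3)
        ((2 * (Real.log r - Real.log c) * r⁻¹) / N - 2 * r⁻¹ / (N:ℝ) ^ 2) r := by
      have h1 : HasDerivAt (fun r : ℝ => (Real.log r - Real.log c) ^ 2)
          (2 * (Real.log r - Real.log c) * r⁻¹) r := by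
        have := hlog.fun_pow 2
        simpa [mul_comm, mul_assoc, mul_left_comm] using this
      simpa using ((h1.div_const (N:ℝ)).sub ((hlog.const_mul 2).div_const ((N:ℝ)^2))).add_const (2 / (N:ℝ) ^ 3)
    have hz : HasDerivAt (fun r : ℝ => r ^ N) ((N:ℝ) * r ^ (N - 1)) r :=
      hasDerivAt_zpow N r (Or.inl hr0.ne')
    have := hz.fun_mul hu
    unfold auxF
    refine this.congr_deriv ?_
    have hrN : r ^ N = r ^ (N - 1) * r := by
      rw [← zpow_add_one₀ hr0.ne', sub_add_cancel]
    rw [hrN]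
    field_simp
    ring
  · apply ContinuousOn.intervalIntegrable
    apply ContinuousOn.mul
    · apply ContinuousOn.pow
      apply ContinuousOn.sub _ continuousOn_const
      apply Real.continuousOn_log.mono
      intro x hx
      rw [Set.uIcc_of_le hab] at hx
      exact (lt_of_lt_of_le ha hx.1).ne'
    · apply ContinuousOn.zpow₀ continuousOn_id _ _
      intro x hx
      rw [Set.uIcc_of_le hab] at hx
      exact Or.inl (lt_of_lt_of_le ha hx.1).ne'

private lemma aux_zpow_int (a b : ℝ) (N : ℤ) (hN : N ≠ 0) (ha : 0 < a) (hab : a ≤ b) :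
    ∫ r in a..b, r ^ (N - 1) = ((b:ℝ) ^ N - a ^ N) / N := by
  rw [integral_zpow]
  · rw [sub_add_cancel]
    congr 1
    push_cast
    ring
  · right
    refine ⟨by omega, ?_⟩
    rw [Set.uIcc_of_le hab]
    intro h
    exact absurd h.1 (not_le.2 ha)

private lemma aux_ineqA (N : ℤ) (hN : 0 < N) (a b : ℝ) (ha : 0 < a) (hab : a ≤ b) :
    ∫ r in a..b, (Real.log b - Real.log r) ^ 2 * r ^ (N - 1) ≤
      2 / (N:ℝ) ^ 2 * ∫ r in a..b, r ^ (N - 1) := by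
  have hNR : (0:ℝ) < (N : ℝ) := by exact_mod_cast hN
  have hsq : ∀ r : ℝ, (Real.log b - Real.log r) ^ 2 = (Real.log r - Real.log b) ^ 2 := by
    intro r; ring
  simp_rw [hsq]
  rw [aux_ftc N hN.ne' b a b ha hab, aux_zpow_int a b N hN.ne' ha hab]
  unfold auxF
  have haN : (0:ℝ) < a ^ N := zpow_pos ha N
  have hq : Real.log a - Real.log b ≤ 0 := by
    have := Real.log_le_log ha hab
    linarith
  set q := Real.log a - Real.log b with hqdef
  have h1 : 0 ≤ a ^ N * (q ^ 2 / N) := by positivity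
  have h2 : 0 ≤ a ^ N * (-(2 * q) / (N:ℝ) ^ 2) := by
    apply mul_nonneg haN.le
    apply div_nonneg _ (by positivity)
    linarith
  rw [sub_self]
  have hN0 : (N:ℝ) ≠ 0 := hNR.ne'
  have key : b ^ N * ((0:ℝ) ^ 2 / N - 2 * 0 / (N:ℝ) ^ 2 + 2 / (N:ℝ) ^ 3)
      - a ^ N * (q ^ 2 / N - 2 * q / (N:ℝ) ^ 2 + 2 / (N:ℝ) ^ 3)
      = 2 / (N:ℝ) ^ 2 * ((b ^ N - a ^ N) / N)
        - (a ^ N * (q ^ 2 / N) + a ^ N * (-(2 * q) / (N:ℝ) ^ 2)) := by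
    field_simp
    ring
  rw [key]
  linarith [h1, h2]

private lemma aux_ineqB (N : ℤ) (hN : N < 0) (a b : ℝ) (ha : 0 < a) (hab : a ≤ b) :
    ∫ r in a..b, (Real.log r - Real.log a) ^ 2 * r ^ (N - 1) ≤
      2 / (N:ℝ) ^ 2 * ∫ r in a..b, r ^ (N - 1) := by
  have hb : 0 < b := lt_of_lt_of_le ha hab
  have hNR : (N : ℝ) < 0 := by exact_mod_cast hN
  rw [aux_ftc N hN.ne a a b ha hab, aux_zpow_int a b N hN.ne ha hab]
  unfold auxF
  have hbN : (0:ℝ) < b ^ N := zpow_pos hb N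
  have hq : 0 ≤ Real.log b - Real.log a := by
    have := Real.log_le_log ha hab
    linarith
  set q := Real.log b - Real.log a with hqdef
  have h1 : b ^ N * (q ^ 2 / N) ≤ 0 := by
    apply mul_nonpos_of_nonneg_of_nonpos hbN.le
    apply div_nonpos_of_nonneg_of_nonpos (by positivity) hNR.le
  have h2 : b ^ N * (-(2 * q) / (N:ℝ) ^ 2) ≤ 0 := by
    apply mul_nonpos_of_nonneg_of_nonpos hbN.le
    apply div_nonpos_of_nonpos_of_nonneg (by linarith) (by positivity)
  rw [sub_self]
  have hN0 : (N:ℝ) ≠ 0 := hNR.ne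
  have key : b ^ N * (q ^ 2 / N - 2 * q / (N:ℝ) ^ 2 + 2 / (N:ℝ) ^ 3)
      - a ^ N * ((0:ℝ) ^ 2 / N - 2 * 0 / (N:ℝ) ^ 2 + 2 / (N:ℝ) ^ 3)
      = 2 / (N:ℝ) ^ 2 * ((b ^ N - a ^ N) / N)
        + (b ^ N * (q ^ 2 / N) + b ^ N * (-(2 * q) / (N:ℝ) ^ 2)) := by
    field_simp
    ring
  rw [key]
  linarith [h1, h2]

private lemma aux_II_zpow (m : ℤ) (a b : ℝ) (ha : 0 < a) (hab : a ≤ b) :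
    IntervalIntegrable (fun r : ℝ => r ^ m) volume a b := by
  apply ContinuousOn.intervalIntegrable
  apply ContinuousOn.zpow₀ continuousOn_id _ _
  intro x hx
  rw [Set.uIcc_of_le hab] at hx
  exact Or.inl (lt_of_lt_of_le ha hx.1).ne'

private lemma aux_II_logsq (c : ℝ) (m : ℤ) (a b : ℝ) (ha : 0 < a) (hab : a ≤ b) :
    IntervalIntegrable (fun r : ℝ => (Real.log c - Real.log r) ^ 2 * r ^ m) volume a b := by
  apply ContinuousOn.intervalIntegrable
  apply ContinuousOn.mul
  · apply ContinuousOn.pow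
    apply ContinuousOn.sub continuousOn_const
    apply Real.continuousOn_log.mono
    intro x hx
    rw [Set.uIcc_of_le hab] at hx
    exact (lt_of_lt_of_le ha hx.1).ne'
  · apply ContinuousOn.zpow₀ continuousOn_id _ _
    intro x hx
    rw [Set.uIcc_of_le hab] at hx
    exact Or.inl (lt_of_lt_of_le ha hx.1).ne'

private lemma aux_II_logsq' (c : ℝ) (m : ℤ) (a b : ℝ) (ha : 0 < a) (hab : a ≤ b) :
    IntervalIntegrable (fun r : ℝ => (Real.log r - Real.log c) ^ 2 * r ^ m) volume a b := by
  have : ∀ r : ℝ, (Real.log r - Real.log c) ^ 2 = (Real.log c - Real.log r) ^ 2 := by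
    intro r; ring
  simp_rw [this]
  exact aux_II_logsq c m a b ha hab

private lemma aux_II_min (m : ℤ) (a b : ℝ) (ha : 0 < a) (hab : a ≤ b) :
    IntervalIntegrable (fun r : ℝ => (min (r - a) (b - r)) ^ 2 * r ^ m) volume a b := by
  apply ContinuousOn.intervalIntegrable
  apply ContinuousOn.mul
  · exact (((continuous_id.sub continuous_const).min
      (continuous_const.sub continuous_id)).pow 2).continuousOn
  · apply ContinuousOn.zpow₀ continuousOn_id _ _
    intro x hx
    rw [Set.uIcc_of_le hab] at hx
    exact Or.inl (lt_of_lt_of_le ha hx.1).ne'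

/-- `b - r ≤ b * (log b - log r)` for `0 < r ≤ b`. -/
private lemma aux_sub_le_log_hi (r b : ℝ) (hr : 0 < r) (hrb : r ≤ b) :
    b - r ≤ b * (Real.log b - Real.log r) := by
  have hb : 0 < b := lt_of_lt_of_le hr hrb
  have h := Real.log_le_sub_one_of_pos (show 0 < r / b by positivity)
  rw [Real.log_div hr.ne' hb.ne'] at h
  have := mul_le_mul_of_nonneg_left h hb.le
  have hrb' : b * (r / b) = r := by field_simp
  nlinarith [this]

/-- `r - a ≤ r * (log r - log a)` for `0 < a ≤ r`. -/
private lemma aux_sub_le_log_lo (r a : ℝ) (ha : 0 < a) (har : a ≤ r) :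
    r - a ≤ r * (Real.log r - Real.log a) := by
  have hr : 0 < r := lt_of_lt_of_le ha har
  have h := Real.log_le_sub_one_of_pos (show 0 < a / r by positivity)
  rw [Real.log_div ha.ne' hr.ne'] at h
  have := mul_le_mul_of_nonneg_left h hr.le
  have : r * (a / r) = a := by field_simp
  nlinarith [mul_le_mul_of_nonneg_left h hr.le]

/-- The core one-dimensional weighted inequality. -/
private lemma aux_oneD (R : ℝ) (hR : 1 ≤ R) (n : ℤ) (hn : n ≠ 0) (a b : ℝ)
    (ha : 0 < a) (hab : a < b) (hbR : b ≤ R) :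
    ∫ r in Ioo a b, (min (r - a) (b - r)) ^ 2 * r ^ (2 * n + 1) ≤
      (5 * (R + 1) ^ 2 / (n:ℝ) ^ 2) * ∫ r in Ioo a b, r ^ (2 * n + 1) := by
  have hb : 0 < b := lt_trans ha hab
  have hn2 : (0:ℝ) < (n:ℝ) ^ 2 := by
    have : (n:ℝ) ≠ 0 := Int.cast_ne_zero.2 hn
    positivity
  rw [← integral_Ioc_eq_integral_Ioo, ← integral_Ioc_eq_integral_Ioo,
    ← intervalIntegral.integral_of_le hab.le, ← intervalIntegral.integral_of_le hab.le]
  have hJ : 0 ≤ ∫ r in a..b, r ^ (2 * n + 1) := by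
    apply intervalIntegral.integral_nonneg hab.le
    intro u hu
    exact zpow_nonneg (le_trans ha.le hu.1) _
  have hminb : ∀ r ∈ Icc a b, 0 ≤ min (r - a) (b - r) ∧ min (r - a) (b - r) ≤ b - r ∧
      min (r - a) (b - r) ≤ r - a := by
    intro r hr
    exact ⟨le_min (by linarith [hr.1]) (by linarith [hr.2]), min_le_right _ _, min_le_left _ _⟩
  have hb1 : b ^ 2 ≤ (R + 1) ^ 2 := by nlinarith
  rcases lt_trichotomy n 0 with hneg | h0 | hpos
  · rcases le_or_gt n (-3) with hsmall | hbig
    · -- n ≤ -3 : use anchored-at-a bound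
      have hexp : (2 * n + 4 : ℤ) - 1 = 2 * n + 3 := by ring
      have step1 : ∫ r in a..b, (min (r - a) (b - r)) ^ 2 * r ^ (2 * n + 1) ≤
          ∫ r in a..b, (Real.log r - Real.log a) ^ 2 * r ^ (2 * n + 3) := by
        apply intervalIntegral.integral_mono_on hab.le
          (aux_II_min _ _ _ ha hab.le) (aux_II_logsq' _ _ _ _ ha hab.le)
        intro r hr
        have hr0 : 0 < r := lt_of_lt_of_le ha hr.1
        have h1 := (hminb r hr).1
        have h3 := (hminb r hr).2.2
        have h4 := aux_sub_le_log_lo r a ha hr.1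
        have hmin2 : (min (r - a) (b - r)) ^ 2 ≤ (r * (Real.log r - Real.log a)) ^ 2 := by
          apply sq_le_sq'
          · nlinarith
          · linarith
        have hzp : (0:ℝ) ≤ r ^ (2 * n + 1) := zpow_nonneg hr0.le _
        calc (min (r - a) (b - r)) ^ 2 * r ^ (2 * n + 1)
            ≤ (r * (Real.log r - Real.log a)) ^ 2 * r ^ (2 * n + 1) :=
              mul_le_mul_of_nonneg_right hmin2 hzp
          _ = (Real.log r - Real.log a) ^ 2 * (r ^ (2:ℤ) * r ^ (2 * n + 1)) := by
              rw [zpow_two]; ring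
          _ = (Real.log r - Real.log a) ^ 2 * r ^ (2 * n + 3) := by
              rw [← zpow_add₀ hr0.ne']
              congr 1
              ring
      have step2 := aux_ineqB (2 * n + 4) (by omega) a b ha hab.le
      rw [hexp] at step2
      have step3 : ∫ r in a..b, r ^ (2 * n + 3) ≤ b ^ 2 * ∫ r in a..b, r ^ (2 * n + 1) := by
        rw [← intervalIntegral.integral_const_mul]
        apply intervalIntegral.integral_mono_on hab.le
          (aux_II_zpow (2 * n + 3) a b ha hab.le)
          ((aux_II_zpow (2 * n + 1) a b ha hab.le).const_mul _)
        intro r hr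
        have hr0 : 0 < r := lt_of_lt_of_le ha hr.1
        have e2 : r ^ (2 * n + 3 : ℤ) = r ^ (2:ℤ) * r ^ (2 * n + 1) := by
          rw [← zpow_add₀ hr0.ne']
          congr 1
          ring
        rw [e2]
        apply mul_le_mul_of_nonneg_right _ (zpow_nonneg hr0.le _)
        rw [zpow_two, sq]
        exact mul_le_mul hr.2 hr.2 hr0.le hb.le
      have hX : (0:ℝ) < (((2 * n + 4 : ℤ)):ℝ) ^ 2 := by
        have : ((2 * n + 4 : ℤ):ℝ) ≠ 0 := by
          simp only [ne_eq, Int.cast_eq_zero]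
          omega
        positivity
      have hx : ((n:ℝ)) ≤ -3 := by exact_mod_cast hsmall
      have hcoef : 2 / (((2 * n + 4 : ℤ)):ℝ) ^ 2 * b ^ 2 ≤ 5 * (R + 1) ^ 2 / (n:ℝ) ^ 2 := by
        have hcast : (((2 * n + 4 : ℤ)):ℝ) = 2 * (n:ℝ) + 4 := by push_cast; ring
        rw [hcast] at hX ⊢
        rw [div_mul_eq_mul_div, div_le_div_iff₀ hX hn2]
        have h5 : 2 * (n:ℝ) ^ 2 ≤ 5 * (2 * (n:ℝ) + 4) ^ 2 := by
          nlinarith [sq_nonneg ((n:ℝ) + 3)]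
        nlinarith [mul_le_mul_of_nonneg_left h5 (sq_nonneg (R + 1)),
          mul_le_mul_of_nonneg_right hb1 (sq_nonneg (n:ℝ))]
      calc ∫ r in a..b, (min (r - a) (b - r)) ^ 2 * r ^ (2 * n + 1)
          ≤ 2 / (((2 * n + 4 : ℤ)):ℝ) ^ 2 * ∫ r in a..b, r ^ (2 * n + 3) :=
            step1.trans step2
        _ ≤ 2 / (((2 * n + 4 : ℤ)):ℝ) ^ 2 * (b ^ 2 * ∫ r in a..b, r ^ (2 * n + 1)) := by
            apply mul_le_mul_of_nonneg_left step3
            positivity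
        _ = (2 / (((2 * n + 4 : ℤ)):ℝ) ^ 2 * b ^ 2) * ∫ r in a..b, r ^ (2 * n + 1) := by ring
        _ ≤ (5 * (R + 1) ^ 2 / (n:ℝ) ^ 2) * ∫ r in a..b, r ^ (2 * n + 1) :=
            mul_le_mul_of_nonneg_right hcoef hJ
    · -- n = -1 or n = -2 : trivial bound
      have hx1 : (-2:ℝ) ≤ (n:ℝ) := by exact_mod_cast (by omega : (-2:ℤ) ≤ n)
      have hx2 : ((n:ℝ)) ≤ -1 := by exact_mod_cast (by omega : n ≤ (-1:ℤ))
      have step1 : ∫ r in a..b, (min (r - a) (b - r)) ^ 2 * r ^ (2 * n + 1) ≤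
          b ^ 2 * ∫ r in a..b, r ^ (2 * n + 1) := by
        rw [← intervalIntegral.integral_const_mul]
        apply intervalIntegral.integral_mono_on hab.le
          (aux_II_min _ _ _ ha hab.le)
          ((aux_II_zpow (2 * n + 1) a b ha hab.le).const_mul _)
        intro r hr
        have hr0 : 0 < r := lt_of_lt_of_le ha hr.1
        apply mul_le_mul_of_nonneg_right _ (zpow_nonneg hr0.le _)
        have h1 := (hminb r hr).1
        have h2 := (hminb r hr).2.1
        apply sq_le_sq'
        · nlinarith
        · nlinarith
      have hcoef : b ^ 2 ≤ 5 * (R + 1) ^ 2 / (n:ℝ) ^ 2 := by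
        rw [le_div_iff₀ hn2]
        have hn4 : (n:ℝ) ^ 2 ≤ 4 := by nlinarith
        nlinarith [mul_le_mul_of_nonneg_right hb1 (sq_nonneg (n:ℝ)),
          mul_le_mul_of_nonneg_left hn4 (sq_nonneg (R+1)), sq_nonneg (R+1)]
      calc ∫ r in a..b, (min (r - a) (b - r)) ^ 2 * r ^ (2 * n + 1)
          ≤ b ^ 2 * ∫ r in a..b, r ^ (2 * n + 1) := step1
        _ ≤ (5 * (R + 1) ^ 2 / (n:ℝ) ^ 2) * ∫ r in a..b, r ^ (2 * n + 1) :=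
            mul_le_mul_of_nonneg_right hcoef hJ
  · exact absurd h0 hn
  · -- n ≥ 1 : use anchored-at-b bound
    have hexp : (2 * n + 2 : ℤ) - 1 = 2 * n + 1 := by ring
    have step1 : ∫ r in a..b, (min (r - a) (b - r)) ^ 2 * r ^ (2 * n + 1) ≤
        b ^ 2 * ∫ r in a..b, (Real.log b - Real.log r) ^ 2 * r ^ (2 * n + 1) := by
      rw [← intervalIntegral.integral_const_mul]
      apply intervalIntegral.integral_mono_on hab.le
        (aux_II_min _ _ _ ha hab.le)
        ((aux_II_logsq b (2 * n + 1) a b ha hab.le).const_mul _)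
      intro r hr
      have hr0 : 0 < r := lt_of_lt_of_le ha hr.1
      have h1 := (hminb r hr).1
      have h2 := (hminb r hr).2.1
      have h4 := aux_sub_le_log_hi r b hr0 hr.2
      have hmin2 : (min (r - a) (b - r)) ^ 2 ≤ (b * (Real.log b - Real.log r)) ^ 2 := by
        apply sq_le_sq'
        · nlinarith
        · linarith
      calc (min (r - a) (b - r)) ^ 2 * r ^ (2 * n + 1)
          ≤ (b * (Real.log b - Real.log r)) ^ 2 * r ^ (2 * n + 1) :=
            mul_le_mul_of_nonneg_right hmin2 (zpow_nonneg hr0.le _)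
        _ = b ^ 2 * ((Real.log b - Real.log r) ^ 2 * r ^ (2 * n + 1)) := by ring
    have step2 := aux_ineqA (2 * n + 2) (by omega) a b ha hab.le
    rw [hexp] at step2
    have hX : (0:ℝ) < (((2 * n + 2 : ℤ)):ℝ) ^ 2 := by
      have : ((2 * n + 2 : ℤ):ℝ) ≠ 0 := by
        simp only [ne_eq, Int.cast_eq_zero]
        omega
      positivity
    have hx : (1:ℝ) ≤ (n:ℝ) := by exact_mod_cast hpos
    have hcoef : b ^ 2 * (2 / (((2 * n + 2 : ℤ)):ℝ) ^ 2) ≤ 5 * (R + 1) ^ 2 / (n:ℝ) ^ 2 := by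
      have hcast : (((2 * n + 2 : ℤ)):ℝ) = 2 * (n:ℝ) + 2 := by push_cast; ring
      rw [hcast] at hX ⊢
      rw [mul_div_assoc', div_le_div_iff₀ hX hn2]
      nlinarith [mul_le_mul_of_nonneg_right hb1 (sq_nonneg (n:ℝ)),
        mul_nonneg (sq_nonneg (R+1)) (sq_nonneg ((n:ℝ))),
        mul_nonneg (mul_nonneg (sq_nonneg (R+1)) (by linarith : (0:ℝ) ≤ (n:ℝ)))
          (by linarith : (0:ℝ) ≤ (n:ℝ)),
        mul_nonneg (sq_nonneg (R+1)) (by linarith : (0:ℝ) ≤ (n:ℝ)), sq_nonneg (R+1)]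
    calc ∫ r in a..b, (min (r - a) (b - r)) ^ 2 * r ^ (2 * n + 1)
        ≤ b ^ 2 * (2 / (((2 * n + 2 : ℤ)):ℝ) ^ 2 * ∫ r in a..b, r ^ (2 * n + 1)) :=
          step1.trans (mul_le_mul_of_nonneg_left step2 (sq_nonneg b))
      _ = (b ^ 2 * (2 / (((2 * n + 2 : ℤ)):ℝ) ^ 2)) * ∫ r in a..b, r ^ (2 * n + 1) := by ring
      _ ≤ (5 * (R + 1) ^ 2 / (n:ℝ) ^ 2) * ∫ r in a..b, r ^ (2 * n + 1) :=
          mul_le_mul_of_nonneg_right hcoef hJ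

private lemma aux_radial_eq (a b : ℝ) (ha : 0 < a) (F : ℝ → ℝ) :
    ∫ w : ℂ, (Ioo a b).indicator F ‖w‖ =
      (2 * (volume (Metric.ball (0:ℂ) 1)).toReal) * ∫ r in Ioo a b, r * F r := by
  have h := integral_fun_norm_addHaar (volume : Measure ℂ) ((Ioo a b).indicator F)
  rw [h, Complex.finrank_real_complex]
  simp only [nsmul_eq_mul, smul_eq_mul, Nat.cast_ofNat, pow_one]
  have hcongr : ∀ y : ℝ, y ^ (2 - 1) * (Ioo a b).indicator F y
      = (Ioo a b).indicator (fun r => r * F r) y := by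
    intro y
    by_cases h : y ∈ Ioo a b <;> simp [h]
  rw [integral_congr_ae (Filter.Eventually.of_forall hcongr) ]
  rw [setIntegral_indicator measurableSet_Ioo]
  have hsub : Ioi (0:ℝ) ∩ Ioo a b = Ioo a b :=
    Set.inter_eq_self_of_subset_right (fun x hx => lt_trans ha hx.1)
  rw [hsub, measureReal_def]
  ring

/-- The annulus inequality on `ℂ`. -/
private lemma aux_annulus (R : ℝ) (hR : 1 ≤ R) (n : ℤ) (hn : n ≠ 0) (a b : ℝ)
    (ha : 0 < a) (hab : a < b) (hbR : b ≤ R) :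
    ∫ w : ℂ, (Ioo a b).indicator (fun r => (min (r - a) (b - r)) ^ 2 * r ^ (2 * n)) ‖w‖ ≤
      (5 * (R + 1) ^ 2 / (n:ℝ) ^ 2) *
        ∫ w : ℂ, (Ioo a b).indicator (fun r => r ^ (2 * n)) ‖w‖ := by
  rw [aux_radial_eq a b ha, aux_radial_eq a b ha]
  have e1 : ∫ r in Ioo a b, r * ((min (r - a) (b - r)) ^ 2 * r ^ (2 * n))
      = ∫ r in Ioo a b, (min (r - a) (b - r)) ^ 2 * r ^ (2 * n + 1) := by
    apply setIntegral_congr_fun measurableSet_Ioo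
    intro r hr
    have hr0 : (0:ℝ) < r := lt_trans ha hr.1
    simp only [zpow_add_one₀ hr0.ne']
    ring
  have e2 : ∫ r in Ioo a b, r * r ^ (2 * n) = ∫ r in Ioo a b, r ^ (2 * n + 1) := by
    apply setIntegral_congr_fun measurableSet_Ioo
    intro r hr
    have hr0 : (0:ℝ) < r := lt_trans ha hr.1
    simp only [zpow_add_one₀ hr0.ne']
    ring
  rw [e1, e2]
  have hc : (0:ℝ) ≤ 2 * (volume (Metric.ball (0:ℂ) 1)).toReal := by positivity
  have h := aux_oneD R hR n hn a b ha hab hbR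
  calc 2 * (volume (Metric.ball (0:ℂ) 1)).toReal
        * ∫ r in Ioo a b, (min (r - a) (b - r)) ^ 2 * r ^ (2 * n + 1)
      ≤ 2 * (volume (Metric.ball (0:ℂ) 1)).toReal
        * ((5 * (R + 1) ^ 2 / (n:ℝ) ^ 2) * ∫ r in Ioo a b, r ^ (2 * n + 1)) :=
        mul_le_mul_of_nonneg_left h hc
    _ = (5 * (R + 1) ^ 2 / (n:ℝ) ^ 2) * (2 * (volume (Metric.ball (0:ℂ) 1)).toReal
        * ∫ r in Ioo a b, r ^ (2 * n + 1)) := by ring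

section Geom

variable (D : Set ℂ) (φ₁ φ₂ : ℂ → ℝ)

private lemma aux_d_nonneg (Ω : Set (ℂ × ℂ)) (p : ℂ × ℂ) : 0 ≤ euclDistToBoundary Ω p := by
  apply Real.sInf_nonneg
  rintro x ⟨q, _, rfl⟩
  exact Real.sqrt_nonneg _

private lemma aux_d_le (Ω : Set (ℂ × ℂ)) (p q : ℂ × ℂ) (hq : q ∈ frontier Ω) :
    euclDistToBoundary Ω p ≤
      Real.sqrt (‖p.1 - q.1‖ ^ 2 + ‖p.2 - q.2‖ ^ 2) := by
  apply csInf_le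
  · exact ⟨0, by rintro x ⟨q', _, rfl⟩; exact Real.sqrt_nonneg _⟩
  · exact Set.mem_image_of_mem _ hq

private lemma aux_d_zero (Ω : Set (ℂ × ℂ)) (p : ℂ × ℂ) (hp : p ∈ frontier Ω) :
    euclDistToBoundary Ω p = 0 := by
  refine le_antisymm ?_ (aux_d_nonneg Ω p)
  have := aux_d_le Ω p p hp
  simpa using this

private lemma aux_seq_pt (z w : ℂ) (t : ℝ) :
    ‖((t / ‖w‖ : ℝ) : ℂ) * w‖ = |t / ‖w‖| * ‖w‖ := by
  rw [norm_mul, Complex.norm_real, Real.norm_eq_abs]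

/-- The radially-translated boundary points. -/
private lemma aux_mem_frontier (z : ℂ) (w : ℂ) (hρ : 0 < ‖w‖)
    (c : ℝ) (hc : 0 < c)
    (cin cout : ℕ → ℝ) (hcin : Tendsto cin atTop (nhds c)) (hcout : Tendsto cout atTop (nhds c))
    (hzD : z ∈ D)
    (hin : ∀ k, φ₁ z < cin k ∧ cin k < φ₂ z ∧ 0 < cin k)
    (hout : ∀ k, (¬ (φ₁ z < cout k ∧ cout k < φ₂ z)) ∧ 0 < cout k) :
    (z, ((c / ‖w‖ : ℝ) : ℂ) * w) ∈
      frontier {p : ℂ × ℂ | p.1 ∈ D ∧ φ₁ p.1 < ‖p.2‖ ∧ ‖p.2‖ < φ₂ p.1} := by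
  set Ω := {p : ℂ × ℂ | p.1 ∈ D ∧ φ₁ p.1 < ‖p.2‖ ∧ ‖p.2‖ < φ₂ p.1} with hΩ
  have key : ∀ t : ℝ, 0 < t → ‖((t / ‖w‖ : ℝ) : ℂ) * w‖ = t := by
    intro t ht
    rw [aux_seq_pt z w t, abs_of_nonneg (by positivity)]
    field_simp
  have hlim : ∀ u : ℕ → ℝ, Tendsto u atTop (nhds c) →
      Tendsto (fun k => (z, ((u k / ‖w‖ : ℝ) : ℂ) * w)) atTop
        (nhds (z, ((c / ‖w‖ : ℝ) : ℂ) * w)) := by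
    intro u hu
    apply Filter.Tendsto.prodMk_nhds tendsto_const_nhds
    exact ((Complex.continuous_ofReal.tendsto _).comp (hu.div_const _)).mul_const w
  rw [frontier_eq_closure_inter_closure]
  constructor
  · apply mem_closure_of_tendsto (hlim cin hcin)
    apply Filter.Eventually.of_forall
    intro k
    refine ⟨hzD, ?_, ?_⟩
    · rw [key _ (hin k).2.2]; exact (hin k).1
    · rw [key _ (hin k).2.2]; exact (hin k).2.1
  · apply mem_closure_of_tendsto (hlim cout hcout)
    apply Filter.Eventually.of_forall
    intro k
    intro hmem
    rw [hΩ] at hmem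
    refine (hout k).1 ⟨?_, ?_⟩
    · have := hmem.2.1
      rwa [key _ (hout k).2] at this
    · have := hmem.2.2
      rwa [key _ (hout k).2] at this

private lemma aux_tend_zero : Tendsto (fun k : ℕ => 1 / ((k:ℝ) + 2)) atTop (nhds 0) := by
  have h : Tendsto (fun k : ℕ => (k:ℝ) + 2) atTop atTop :=
    Filter.tendsto_atTop_add_const_right _ 2 tendsto_natCast_atTop_atTop
  simpa [one_div, Pi.inv_def] using h.inv_tendsto_atTop

/-- The outer-radius frontier point. -/
private lemma aux_hi_mem_frontier (z w : ℂ) (hφ1 : 0 < φ₁ z)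
    (hp : (z, w) ∈ {p : ℂ × ℂ | p.1 ∈ D ∧ φ₁ p.1 < ‖p.2‖ ∧ ‖p.2‖ < φ₂ p.1}) :
    (z, ((φ₂ z / ‖w‖ : ℝ) : ℂ) * w) ∈
      frontier {p : ℂ × ℂ | p.1 ∈ D ∧ φ₁ p.1 < ‖p.2‖ ∧ ‖p.2‖ < φ₂ p.1} := by
  obtain ⟨hzD, h1, h2⟩ := hp
  simp only at h1 h2
  have hρ : 0 < ‖w‖ := lt_trans hφ1 h1
  have hab : φ₁ z < φ₂ z := lt_trans h1 h2
  set a := φ₁ z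
  set b := φ₂ z
  apply aux_mem_frontier D φ₁ φ₂ z w hρ b (lt_trans hφ1 hab)
    (fun k => b - (b - a) * (1 / ((k:ℝ) + 2))) (fun k => b + (b - a) * (1 / ((k:ℝ) + 2)))
    ?_ ?_ hzD ?_ ?_
  · have := aux_tend_zero.const_mul (b - a)
    have h2 := (tendsto_const_nhds : Tendsto (fun _ : ℕ => b) atTop (nhds b)).sub this
    simpa using h2
  · have := aux_tend_zero.const_mul (b - a)
    have h2 := (tendsto_const_nhds : Tendsto (fun _ : ℕ => b) atTop (nhds b)).add this
    simpa using h2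
  · intro k
    have hk2 : (0:ℝ) < (k:ℝ) + 2 := by positivity
    have hba : 0 < b - a := sub_pos.2 hab
    have hfr : 0 < (b - a) * (1 / ((k:ℝ) + 2)) := by positivity
    have hfr2 : (b - a) * (1 / ((k:ℝ) + 2)) ≤ (b - a) * (1 / 2) := by
      apply mul_le_mul_of_nonneg_left _ (by linarith)
      rw [div_le_div_iff₀ hk2 (by norm_num)]
      linarith [Nat.cast_nonneg (α := ℝ) k]
    refine ⟨by linarith, by linarith, by linarith⟩
  · intro k
    have hk2 : (0:ℝ) < (k:ℝ) + 2 := by positivity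
    have hba : 0 < b - a := sub_pos.2 hab
    have hfr : 0 < (b - a) * (1 / ((k:ℝ) + 2)) := by positivity
    constructor
    · rintro ⟨-, h⟩
      linarith
    · linarith

/-- distance bound from above (outer radius). -/
private lemma aux_d_le_hi (z w : ℂ) (hφ1 : 0 < φ₁ z)
    (hp : (z, w) ∈ {p : ℂ × ℂ | p.1 ∈ D ∧ φ₁ p.1 < ‖p.2‖ ∧ ‖p.2‖ < φ₂ p.1}) :
    euclDistToBoundary {p : ℂ × ℂ | p.1 ∈ D ∧ φ₁ p.1 < ‖p.2‖ ∧ ‖p.2‖ < φ₂ p.1}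
      (z, w) ≤ φ₂ z - ‖w‖ := by
  obtain ⟨hzD, h1, h2⟩ := hp
  simp only at h1 h2
  have hρ : 0 < ‖w‖ := lt_trans hφ1 h1
  have hab : φ₁ z < φ₂ z := lt_trans h1 h2
  set a := φ₁ z
  set b := φ₂ z
  have hq : (z, ((b / ‖w‖ : ℝ) : ℂ) * w) ∈
      frontier {p : ℂ × ℂ | p.1 ∈ D ∧ φ₁ p.1 < ‖p.2‖ ∧ ‖p.2‖ < φ₂ p.1} :=
    aux_hi_mem_frontier D φ₁ φ₂ z w hφ1 ⟨hzD, h1, h2⟩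
  have hd := aux_d_le _ (z, w) _ hq
  apply hd.trans_eq
  simp only
  have e1 : w - ((b / ‖w‖ : ℝ) : ℂ) * w = (((1 - b / ‖w‖ : ℝ)) : ℂ) * w := by
    push_cast
    ring
  rw [sub_self, e1, norm_mul, Complex.norm_real, Real.norm_eq_abs]
  have e2 : |1 - b / ‖w‖| = b / ‖w‖ - 1 := by
    rw [abs_of_nonpos]
    · ring
    · rw [sub_nonpos, le_div_iff₀ hρ, one_mul]
      exact h2.le
  rw [e2]
  have e3 : (b / ‖w‖ - 1) * ‖w‖ = b - ‖w‖ := by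
    field_simp
  rw [e3]
  simp only [norm_zero]
  rw [zero_pow (by norm_num), zero_add]
  exact Real.sqrt_sq (by linarith)

/-- distance bound from below (inner radius). -/
private lemma aux_d_le_lo (z w : ℂ) (hφ1 : 0 < φ₁ z)
    (hp : (z, w) ∈ {p : ℂ × ℂ | p.1 ∈ D ∧ φ₁ p.1 < ‖p.2‖ ∧ ‖p.2‖ < φ₂ p.1}) :
    euclDistToBoundary {p : ℂ × ℂ | p.1 ∈ D ∧ φ₁ p.1 < ‖p.2‖ ∧ ‖p.2‖ < φ₂ p.1}
      (z, w) ≤ ‖w‖ - φ₁ z := by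
  obtain ⟨hzD, h1, h2⟩ := hp
  simp only at h1 h2
  have hρ : 0 < ‖w‖ := lt_trans hφ1 h1
  have hab : φ₁ z < φ₂ z := lt_trans h1 h2
  set a := φ₁ z
  set b := φ₂ z
  have hq : (z, ((a / ‖w‖ : ℝ) : ℂ) * w) ∈
      frontier {p : ℂ × ℂ | p.1 ∈ D ∧ φ₁ p.1 < ‖p.2‖ ∧ ‖p.2‖ < φ₂ p.1} := by
    apply aux_mem_frontier D φ₁ φ₂ z w hρ a hφ1
      (fun k => a + (b - a) * (1 / ((k:ℝ) + 2))) (fun k => a - a * (1 / ((k:ℝ) + 2)))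
      ?_ ?_ hzD ?_ ?_
    · have := aux_tend_zero.const_mul (b - a)
      have h2 := (tendsto_const_nhds : Tendsto (fun _ : ℕ => a) atTop (nhds a)).add this
      simpa using h2
    · have := aux_tend_zero.const_mul a
      have h2 := (tendsto_const_nhds : Tendsto (fun _ : ℕ => a) atTop (nhds a)).sub this
      simpa using h2
    · intro k
      have hk2 : (0:ℝ) < (k:ℝ) + 2 := by positivity
      have hba : 0 < b - a := sub_pos.2 hab
      have hfr : 0 < (b - a) * (1 / ((k:ℝ) + 2)) := by positivity
      have hfr2 : (b - a) * (1 / ((k:ℝ) + 2)) ≤ (b - a) * (1 / 2) := by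
        apply mul_le_mul_of_nonneg_left _ (by linarith)
        rw [div_le_div_iff₀ hk2 (by norm_num)]
        linarith [Nat.cast_nonneg (α := ℝ) k]
      refine ⟨by linarith, by linarith, by linarith⟩
    · intro k
      have hk2 : (0:ℝ) < (k:ℝ) + 2 := by positivity
      have hfr : 0 < a * (1 / ((k:ℝ) + 2)) := by positivity
      have hfr2 : a * (1 / ((k:ℝ) + 2)) ≤ a * (1 / 2) := by
        apply mul_le_mul_of_nonneg_left _ (by linarith)
        rw [div_le_div_iff₀ hk2 (by norm_num)]
        linarith [Nat.cast_nonneg (α := ℝ) k]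
      constructor
      · rintro ⟨h, -⟩
        linarith
      · linarith
  have hd := aux_d_le _ (z, w) _ hq
  apply hd.trans_eq
  simp only
  have e1 : w - ((a / ‖w‖ : ℝ) : ℂ) * w = (((1 - a / ‖w‖ : ℝ)) : ℂ) * w := by
    push_cast
    ring
  rw [sub_self, e1, norm_mul, Complex.norm_real, Real.norm_eq_abs]
  have e2 : |1 - a / ‖w‖| = 1 - a / ‖w‖ := by
    rw [abs_of_nonneg]
    rw [sub_nonneg, div_le_iff₀ hρ, one_mul]
    exact h1.le
  rw [e2]
  have e3 : (1 - a / ‖w‖) * ‖w‖ = ‖w‖ - a := by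
    field_simp
  rw [e3]
  simp only [norm_zero]
  rw [zero_pow (by norm_num), zero_add]
  exact Real.sqrt_sq (by linarith)

end Geom

private lemma aux_sqrt_tri (x1 x2 y1 y2 c1 c2 : ℝ) (hx1 : 0 ≤ x1) (hx2 : 0 ≤ x2)
    (hy1 : 0 ≤ y1) (hy2 : 0 ≤ y2) (hc1 : 0 ≤ c1) (hc2 : 0 ≤ c2)
    (h1 : x1 ≤ y1 + c1) (h2 : x2 ≤ y2 + c2) :
    Real.sqrt (x1 ^ 2 + x2 ^ 2) ≤ Real.sqrt (y1 ^ 2 + y2 ^ 2) + c1 + c2 := by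
  set s := Real.sqrt (y1 ^ 2 + y2 ^ 2) with hs
  have hs0 : 0 ≤ s := Real.sqrt_nonneg _
  have hssq : s ^ 2 = y1 ^ 2 + y2 ^ 2 := Real.sq_sqrt (by positivity)
  have hy1s : y1 ≤ s := by
    rw [← Real.sqrt_sq hy1]
    exact Real.sqrt_le_sqrt (by nlinarith)
  have hy2s : y2 ≤ s := by
    rw [← Real.sqrt_sq hy2]
    exact Real.sqrt_le_sqrt (by nlinarith)
  calc Real.sqrt (x1 ^ 2 + x2 ^ 2) ≤ Real.sqrt ((s + c1 + c2) ^ 2) := by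
        apply Real.sqrt_le_sqrt
        nlinarith
    _ = s + c1 + c2 := Real.sqrt_sq (by positivity)

private lemma aux_d_onesided (Ω : Set (ℂ × ℂ)) (hne : (frontier Ω).Nonempty) (p q : ℂ × ℂ) :
    euclDistToBoundary Ω p ≤ euclDistToBoundary Ω q
      + (‖p.1 - q.1‖ + ‖p.2 - q.2‖) := by
  have key : euclDistToBoundary Ω p - (‖p.1 - q.1‖ + ‖p.2 - q.2‖) ≤
      euclDistToBoundary Ω q := by
    apply le_csInf (hne.image _)
    rintro x ⟨r, hr, rfl⟩
    rw [sub_le_iff_le_add]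
    have h1 := aux_d_le Ω p r hr
    have := aux_sqrt_tri (‖p.1 - r.1‖) (‖p.2 - r.2‖)
      (‖q.1 - r.1‖) (‖q.2 - r.2‖)
      (‖p.1 - q.1‖) (‖p.2 - q.2‖)
      (norm_nonneg _) (norm_nonneg _) (norm_nonneg _)
      (norm_nonneg _) (norm_nonneg _) (norm_nonneg _)
      (by rw [add_comm]; exact norm_sub_le_norm_sub_add_norm_sub p.1 q.1 r.1)
      (by rw [add_comm]; exact norm_sub_le_norm_sub_add_norm_sub p.2 q.2 r.2)
    simp only
    linarith [h1, this]
  linarith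

private lemma aux_d_cont (Ω : Set (ℂ × ℂ)) (hne : (frontier Ω).Nonempty) :
    Continuous (euclDistToBoundary Ω) := by
  apply LipschitzWith.continuous (K := 2)
  apply LipschitzWith.of_dist_le_mul
  intro p q
  rw [Real.dist_eq, abs_sub_le_iff]
  have hpq := aux_d_onesided Ω hne p q
  have hqp := aux_d_onesided Ω hne q p
  have e1 : ‖p.1 - q.1‖ = dist p.1 q.1 := (Complex.dist_eq _ _).symm
  have e2 : ‖p.2 - q.2‖ = dist p.2 q.2 := (Complex.dist_eq _ _).symm
  have e1' : ‖q.1 - p.1‖ = dist p.1 q.1 :=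
    (norm_sub_rev q.1 p.1).trans e1
  have e2' : ‖q.2 - p.2‖ = dist p.2 q.2 :=
    (norm_sub_rev q.2 p.2).trans e2
  have hd1 : dist p.1 q.1 ≤ dist p q := by
    rw [Prod.dist_eq]; exact le_max_left _ _
  have hd2 : dist p.2 q.2 ≤ dist p q := by
    rw [Prod.dist_eq]; exact le_max_right _ _
  have hcoe : (((2:ℝ≥0)):ℝ) * dist p q = 2 * dist p q := by norm_num
  rw [hcoe]
  constructor
  · rw [e1, e2] at hpq
    linarith
  · rw [e1', e2'] at hqp
    linarith

private lemma aux_measurable_zpow (m : ℤ) : Measurable (fun x : ℝ => x ^ m) := by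
  rcases le_or_gt 0 m with h | h
  · have : (fun x : ℝ => x ^ m) = fun x : ℝ => x ^ m.toNat := by
      funext x
      rw [← zpow_natCast, Int.toNat_of_nonneg h]
    rw [this]
    exact measurable_id.pow_const m.toNat
  · obtain ⟨k, hk⟩ : ∃ k : ℕ, m = -(k:ℤ) := ⟨(-m).toNat, by omega⟩
    subst hk
    have : (fun x : ℝ => x ^ (-(k:ℤ))) = fun x : ℝ => (x ^ k)⁻¹ := by
      funext x
      rw [zpow_neg, zpow_natCast]
    rw [this]
    exact (measurable_id.pow_const k).inv

private lemma aux_zpow_le_bound (m : ℤ) (a b r : ℝ) (ha : 0 < a) (h1 : a ≤ r) (h2 : r ≤ b) :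
    r ^ m ≤ a ^ m + b ^ m := by
  have hr : 0 < r := lt_of_lt_of_le ha h1
  have hb : 0 < b := lt_of_lt_of_le hr h2
  rcases le_or_gt 0 m with h | h
  · obtain ⟨k, hk⟩ : ∃ k : ℕ, m = (k:ℤ) := ⟨m.toNat, by omega⟩
    subst hk
    simp only [zpow_natCast]
    have := pow_le_pow_left₀ hr.le h2 k
    have := pow_pos ha k
    linarith
  · obtain ⟨k, hk⟩ : ∃ k : ℕ, m = -(k:ℤ) := ⟨(-m).toNat, by omega⟩
    subst hk
    simp only [zpow_neg, zpow_natCast]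
    have h3 : a ^ k ≤ r ^ k := pow_le_pow_left₀ ha.le h1 k
    have h4 : (r ^ k)⁻¹ ≤ (a ^ k)⁻¹ := by
      apply inv_anti₀ (pow_pos ha k) h3
    have : (0:ℝ) < (b ^ k)⁻¹ := by positivity
    linarith

private lemma aux_integrable_radial (a b : ℝ) (ha : 0 < a) (F : ℝ → ℝ)
    (hF : Measurable F) (M : ℝ) (hM : ∀ r ∈ Ioo a b, |F r| ≤ M) :
    Integrable (fun w : ℂ => (Ioo a b).indicator F ‖w‖) volume := by
  have hset : MeasurableSet {w : ℂ | ‖w‖ ∈ Ioo a b} :=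
    measurable_norm measurableSet_Ioo
  have heq : (fun w : ℂ => (Ioo a b).indicator F ‖w‖)
      = Set.indicator {w : ℂ | ‖w‖ ∈ Ioo a b} (fun w => F ‖w‖) := by
    funext w
    by_cases h : ‖w‖ ∈ Ioo a b
    · rw [Set.indicator_of_mem h, Set.indicator_of_mem (by exact h)]
    · rw [Set.indicator_of_notMem h, Set.indicator_of_notMem (by exact h)]
  rw [heq, integrable_indicator_iff hset]
  apply Measure.integrableOn_of_bounded (M := |M|)
  · apply ne_of_lt
    calc volume {w : ℂ | ‖w‖ ∈ Ioo a b} ≤ volume (Metric.ball (0:ℂ) b) := by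
          apply measure_mono
          intro w hw
          rw [Metric.mem_ball, dist_zero_right]
          exact hw.2
      _ < ⊤ := measure_ball_lt_top
  · exact (hF.comp measurable_norm).aestronglyMeasurable
  · rw [ae_restrict_iff' hset]
    apply Filter.Eventually.of_forall
    intro w hw
    have := hM ‖w‖ hw
    calc ‖F ‖w‖‖ = |F ‖w‖| := rfl
      _ ≤ M := this
      _ ≤ |M| := le_abs_self M

set_option maxHeartbeats 1000000 in
/-- On a bounded Hartogs domain
`Ω = {(z,w) : z ∈ D, φ₁(z) < |w| < φ₂(z)}` there is `C > 0` such that for every nonzero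
integer `n` and measurable `g`,
`∫_Ω d_Ω² |g(z)|² |w|^{2n} dV ≤ (C/n²) ∫_Ω |g(z)|² |w|^{2n} dV`
whenever the right-hand side is finite. -/
theorem hartogs_distance_weighted_integral_bound (D : Set ℂ) (hD : IsOpen D)
    (hDne : D.Nonempty) (φ₁ φ₂ : ℂ → ℝ) (hφ : ∀ z ∈ D, 0 < φ₁ z ∧ φ₁ z < φ₂ z)
    (hbd : Bornology.IsBounded
      {p : ℂ × ℂ | p.1 ∈ D ∧ φ₁ p.1 < ‖p.2‖ ∧ ‖p.2‖ < φ₂ p.1}) :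
    ∃ C > (0 : ℝ), ∀ n : ℤ, n ≠ 0 → ∀ g : ℂ → ℂ, Measurable g →
      Integrable (fun p : ℂ × ℂ => ‖g p.1‖ ^ 2 * ‖p.2‖ ^ (2 * n))
        (volume.restrict
          {p : ℂ × ℂ | p.1 ∈ D ∧ φ₁ p.1 < ‖p.2‖ ∧ ‖p.2‖ < φ₂ p.1}) →
      (∫ p in {p : ℂ × ℂ | p.1 ∈ D ∧ φ₁ p.1 < ‖p.2‖ ∧ ‖p.2‖ < φ₂ p.1},
          (euclDistToBoundary
              {p : ℂ × ℂ | p.1 ∈ D ∧ φ₁ p.1 < ‖p.2‖ ∧ ‖p.2‖ < φ₂ p.1} p) ^ 2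
            * ‖g p.1‖ ^ 2 * ‖p.2‖ ^ (2 * n)) ≤
        (C / (n : ℝ) ^ 2) *
          ∫ p in {p : ℂ × ℂ | p.1 ∈ D ∧ φ₁ p.1 < ‖p.2‖ ∧ ‖p.2‖ < φ₂ p.1},
            ‖g p.1‖ ^ 2 * ‖p.2‖ ^ (2 * n) := by
  classical
  set Ω := {p : ℂ × ℂ | p.1 ∈ D ∧ φ₁ p.1 < ‖p.2‖ ∧ ‖p.2‖ < φ₂ p.1} with hΩdef
  -- a bound for the domain
  obtain ⟨R₀, hR₀⟩ := isBounded_iff_forall_norm_le.1 hbd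
  set R : ℝ := max R₀ 1 with hRdef
  have hR1 : (1:ℝ) ≤ R := le_max_right _ _
  have hR0 : (0:ℝ) < R := lt_of_lt_of_le one_pos hR1
  have hΩR : ∀ p ∈ Ω, ‖p‖ ≤ R := fun p hp => (hR₀ p hp).trans (le_max_left _ _)
  have hΩball : Ω ⊆ Metric.closedBall (0 : ℂ × ℂ) R := by
    intro p hp
    rw [Metric.mem_closedBall, dist_zero_right]
    exact hΩR p hp
  have hclos : closure Ω ⊆ Metric.closedBall (0 : ℂ × ℂ) R :=
    closure_minimal hΩball Metric.isClosed_closedBall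
  -- Ω is nonempty, hence has a frontier point
  obtain ⟨z₀, hz₀⟩ := hDne
  have hp₀ : (z₀, (((φ₁ z₀ + φ₂ z₀) / 2 : ℝ) : ℂ)) ∈ Ω := by
    obtain ⟨h1, h2⟩ := hφ z₀ hz₀
    refine ⟨hz₀, ?_, ?_⟩ <;>
      simp only [Complex.norm_real, Real.norm_eq_abs] <;> rw [abs_of_nonneg (by linarith)] <;> [linarith; linarith]
  have hfront_ne : (frontier Ω).Nonempty :=
    ⟨_, aux_hi_mem_frontier D φ₁ φ₂ z₀ _ (hφ z₀ hz₀).1 hp₀⟩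
  obtain ⟨q₀, hq₀⟩ := hfront_ne
  have hq₀R : ‖q₀‖ ≤ R := by
    have := hclos (frontier_subset_closure hq₀)
    rwa [Metric.mem_closedBall, dist_zero_right] at this
  -- the distance function is bounded by 3R on the closure
  have hdbd : ∀ p ∈ closure Ω, euclDistToBoundary Ω p ≤ 3 * R := by
    intro p hp
    have hpR : ‖p‖ ≤ R := by
      have := hclos hp
      rwa [Metric.mem_closedBall, dist_zero_right] at this
    have h1 : ‖p.1 - q₀.1‖ ≤ 2 * R := by
      calc ‖p.1 - q₀.1‖ ≤ ‖p.1‖ + ‖q₀.1‖ := norm_sub_le _ _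
        _ ≤ ‖p‖ + ‖q₀‖ := add_le_add (norm_fst_le p) (norm_fst_le q₀)
        _ ≤ 2 * R := by linarith
    have h2 : ‖p.2 - q₀.2‖ ≤ 2 * R := by
      calc ‖p.2 - q₀.2‖ ≤ ‖p.2‖ + ‖q₀.2‖ := norm_sub_le _ _
        _ ≤ ‖p‖ + ‖q₀‖ := add_le_add (norm_snd_le p) (norm_snd_le q₀)
        _ ≤ 2 * R := by linarith
    calc euclDistToBoundary Ω p
        ≤ Real.sqrt (‖p.1 - q₀.1‖ ^ 2 + ‖p.2 - q₀.2‖ ^ 2) :=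
          aux_d_le Ω p q₀ hq₀
      _ ≤ Real.sqrt ((3 * R) ^ 2) := by
          apply Real.sqrt_le_sqrt
          nlinarith [norm_nonneg (p.1 - q₀.1), norm_nonneg (p.2 - q₀.2)]
      _ = 3 * R := Real.sqrt_sq (by linarith)
  -- the measurable hull within the closure
  have hfin : volume Ω ≠ ⊤ := by
    apply ne_of_lt
    calc volume Ω ≤ volume (Metric.closedBall (0 : ℂ × ℂ) R) := measure_mono hΩball
      _ < ⊤ := (isCompact_closedBall _ _).measure_lt_top
  set S : Set (ℂ × ℂ) := toMeasurable volume Ω ∩ closure Ω with hSdef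
  have hΩsubS : Ω ⊆ S := subset_inter (subset_toMeasurable _ _) subset_closure
  have hSm : MeasurableSet S :=
    (measurableSet_toMeasurable _ _).inter isClosed_closure.measurableSet
  have hSK : S ⊆ closure Ω := inter_subset_right
  have hres : volume.restrict Ω = volume.restrict S := by
    have hμT : volume (toMeasurable volume Ω) = volume Ω := measure_toMeasurable _
    have hμS : volume S ≠ ⊤ := by
      apply ne_of_lt
      calc volume S ≤ volume (toMeasurable volume Ω) := measure_mono inter_subset_left
        _ < ⊤ := by rw [hμT]; exact lt_of_le_of_ne le_top hfin
    have hTS : volume (toMeasurable volume Ω \ S) = 0 := by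
      rw [measure_diff inter_subset_left hSm.nullMeasurableSet hμS, hμT]
      apply tsub_eq_zero_of_le
      exact measure_mono hΩsubS
    have hae : toMeasurable volume Ω =ᵐ[volume] S := by
      rw [ae_eq_set]
      refine ⟨hTS, ?_⟩
      rw [Set.diff_eq_empty.2 inter_subset_left]
      exact measure_empty
    rw [← Measure.restrict_toMeasurable hfin, Measure.restrict_congr_set hae]
  -- φ₂ is bounded by R on D
  have hφ₂R : ∀ z ∈ D, φ₂ z ≤ R := by
    intro z hz
    by_contra hcon
    push_neg at hcon
    obtain ⟨h1, h2⟩ := hφ z hz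
    set t : ℝ := max ((φ₁ z + φ₂ z) / 2) ((R + φ₂ z) / 2) with htdef
    have ht1 : φ₁ z < t := lt_of_lt_of_le (by linarith) (le_max_left _ _)
    have ht2 : t < φ₂ z := max_lt (by linarith) (by linarith)
    have ht0 : 0 < t := lt_trans h1 ht1
    have htR : R < t := lt_of_lt_of_le (by linarith) (le_max_right _ _)
    have hmem : (z, ((t : ℝ) : ℂ)) ∈ Ω := by
      refine ⟨hz, ?_, ?_⟩ <;> simp only [Complex.norm_real, Real.norm_eq_abs] <;>
        rw [abs_of_nonneg ht0.le] <;> [exact ht1; exact ht2]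
    have := hΩR _ hmem
    have hsnd : ‖((z, ((t : ℝ) : ℂ)) : ℂ × ℂ).2‖ ≤ R := le_trans (norm_snd_le _) this
    rw [Complex.norm_real, Real.norm_eq_abs, abs_of_nonneg ht0.le] at hsnd
    linarith
  -- the constant
  refine ⟨5 * (R + 1) ^ 2, by positivity, ?_⟩
  intro n hn g hg hInt
  set I1 : ℂ × ℂ → ℝ := fun p => (euclDistToBoundary Ω p) ^ 2
    * ‖g p.1‖ ^ 2 * ‖p.2‖ ^ (2 * n) with hI1def
  set I2 : ℂ × ℂ → ℝ := fun p => ‖g p.1‖ ^ 2 * ‖p.2‖ ^ (2 * n) with hI2def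
  rw [hres] at hInt ⊢
  have hd_meas : Measurable (euclDistToBoundary Ω) := (aux_d_cont Ω ⟨q₀, hq₀⟩).measurable
  have habs_fst : Measurable (fun p : ℂ × ℂ => ‖g p.1‖) :=
    continuous_norm.measurable.comp (hg.comp measurable_fst)
  have hzpow_snd : Measurable (fun p : ℂ × ℂ => ‖p.2‖ ^ (2 * n)) :=
    (aux_measurable_zpow (2 * n)).comp (continuous_norm.measurable.comp measurable_snd)
  have hI2m : Measurable I2 := (habs_fst.pow_const 2).mul hzpow_snd
  have hI1m : Measurable I1 :=
    ((hd_meas.pow_const 2).mul (habs_fst.pow_const 2)).mul hzpow_snd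
  have hI2nn : ∀ p, 0 ≤ I2 p := fun p =>
    mul_nonneg (by positivity) (zpow_nonneg (norm_nonneg _) _)
  have hI1nn : ∀ p, 0 ≤ I1 p := fun p =>
    mul_nonneg (mul_nonneg (sq_nonneg _) (sq_nonneg _)) (zpow_nonneg (norm_nonneg _) _)
  -- I1 is integrable on S
  have hInt1 : Integrable I1 (volume.restrict S) := by
    apply Integrable.mono (hInt.const_mul (9 * R ^ 2)) hI1m.aestronglyMeasurable
    rw [ae_restrict_iff' hSm]
    apply Filter.Eventually.of_forall
    intro p hp
    have hd3R := hdbd p (hSK hp)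
    have hd0 := aux_d_nonneg Ω p
    have hdsq : (euclDistToBoundary Ω p) ^ 2 ≤ 9 * R ^ 2 := by nlinarith
    rw [Real.norm_eq_abs, Real.norm_eq_abs, abs_of_nonneg (hI1nn p),
      abs_of_nonneg (mul_nonneg (by positivity) (hI2nn p))]
    calc I1 p = (euclDistToBoundary Ω p) ^ 2 * ‖g p.1‖ ^ 2
          * ‖p.2‖ ^ (2 * n) := rfl
      _ ≤ (9 * R ^ 2) * ‖g p.1‖ ^ 2 * ‖p.2‖ ^ (2 * n) := by
          apply mul_le_mul_of_nonneg_right _ (zpow_nonneg (norm_nonneg _) _)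
          exact mul_le_mul_of_nonneg_right hdsq (sq_nonneg _)
      _ = 9 * R ^ 2 * I2 p := by rw [hI2def]; ring
  -- move to the product measure
  have hvol : (volume : Measure (ℂ × ℂ)) = (volume : Measure ℂ).prod volume :=
    Measure.volume_eq_prod ℂ ℂ
  have hind1 : Integrable (S.indicator I1) ((volume : Measure ℂ).prod volume) := by
    rw [← hvol]
    exact (integrable_indicator_iff hSm).2 hInt1
  have hind2 : Integrable (S.indicator I2) ((volume : Measure ℂ).prod volume) := by
    rw [← hvol]
    exact (integrable_indicator_iff hSm).2 hInt
  have hFub1 : ∫ p in S, I1 p = ∫ z : ℂ, ∫ w : ℂ, S.indicator I1 (z, w) := by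
    rw [← integral_indicator hSm, hvol]
    exact integral_prod _ hind1
  have hFub2 : ∫ p in S, I2 p = ∫ z : ℂ, ∫ w : ℂ, S.indicator I2 (z, w) := by
    rw [← integral_indicator hSm, hvol]
    exact integral_prod _ hind2
  have hsl1 := hind1.prod_right_ae
  have hsl2 := hind2.prod_right_ae
  -- the slicewise inequality
  have hae : ∀ᵐ z : ℂ, (∫ w : ℂ, S.indicator I1 (z, w)) ≤
      (5 * (R + 1) ^ 2 / (n:ℝ) ^ 2) * ∫ w : ℂ, S.indicator I2 (z, w) := by
    filter_upwards [hsl1, hsl2] with z hE1 hE2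
    by_cases hzD : z ∈ D
    · obtain ⟨ha0, hab⟩ := hφ z hzD
      have hbR : φ₂ z ≤ R := hφ₂R z hzD
      set a := φ₁ z with hadef
      set b := φ₂ z with hbdef
      set G := ‖g z‖ ^ 2 with hGdef
      have hGnn : 0 ≤ G := sq_nonneg _
      set F1 : ℝ → ℝ := fun r => (min (r - a) (b - r)) ^ 2 * r ^ (2 * n) with hF1def
      set F2 : ℝ → ℝ := fun r => r ^ (2 * n) with hF2def
      have hF2int : Integrable (fun w : ℂ => (Ioo a b).indicator F2 ‖w‖) volume := by
        apply aux_integrable_radial a b ha0 F2 (aux_measurable_zpow _) (a ^ (2*n) + b ^ (2*n))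
        intro r hr
        rw [hF2def, abs_of_nonneg (zpow_nonneg (lt_trans ha0 hr.1).le _)]
        exact aux_zpow_le_bound _ a b r ha0 hr.1.le hr.2.le
      have hF1m : Measurable F1 :=
        (((measurable_id.sub_const a).min (measurable_const.sub measurable_id)).pow_const 2).mul
          (aux_measurable_zpow _)
      have hF1nn : ∀ r, 0 ≤ r → 0 ≤ F1 r := fun r hr =>
        mul_nonneg (sq_nonneg _) (zpow_nonneg hr _)
      have hF1int : Integrable (fun w : ℂ => (Ioo a b).indicator F1 ‖w‖) volume := by
        apply aux_integrable_radial a b ha0 F1 hF1m (b ^ 2 * (a ^ (2*n) + b ^ (2*n)))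
        intro r hr
        have hr0 : 0 < r := lt_trans ha0 hr.1
        rw [abs_of_nonneg (hF1nn r hr0.le)]
        have h1 : 0 ≤ min (r - a) (b - r) := le_min (by linarith [hr.1]) (by linarith [hr.2])
        have h2 : min (r - a) (b - r) ≤ b := le_trans (min_le_right _ _) (by linarith)
        have h3 : (min (r - a) (b - r)) ^ 2 ≤ b ^ 2 := by nlinarith
        apply mul_le_mul h3 (aux_zpow_le_bound _ a b r ha0 hr.1.le hr.2.le)
          (zpow_nonneg hr0.le _) (sq_nonneg b)
      have hptw1 : ∀ w : ℂ, S.indicator I1 (z, w) ≤ G * ((Ioo a b).indicator F1 ‖w‖) := by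
        intro w
        by_cases hwS : (z, w) ∈ S
        · rw [Set.indicator_of_mem hwS]
          by_cases hwΩ : (z, w) ∈ Ω
          · have h1 : a < ‖w‖ := hwΩ.2.1
            have h2 : ‖w‖ < b := hwΩ.2.2
            have hnorm : ‖w‖ = ‖w‖ := rfl
            have hio : ‖w‖ ∈ Ioo a b := by rw [hnorm]; exact ⟨h1, h2⟩
            rw [Set.indicator_of_mem hio]
            have hd1 := aux_d_le_lo D φ₁ φ₂ z w ha0 hwΩ
            have hd2 := aux_d_le_hi D φ₁ φ₂ z w ha0 hwΩ
            have hd0 := aux_d_nonneg Ω (z, w)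
            have hminnn : 0 ≤ min (‖w‖ - a) (b - ‖w‖) := by
              rw [hnorm]
              exact le_min (by linarith) (by linarith)
            have hsq : euclDistToBoundary Ω (z, w) ^ 2 ≤ (min (‖w‖ - a) (b - ‖w‖)) ^ 2 := by
              have hmin : euclDistToBoundary Ω (z, w) ≤ min (‖w‖ - a) (b - ‖w‖) := by
                rw [hnorm]
                exact le_min hd1 hd2
              nlinarith
            have hW : (0:ℝ) ≤ ‖w‖ ^ (2 * n) := zpow_nonneg (norm_nonneg w) _
            calc I1 (z, w) = euclDistToBoundary Ω (z, w) ^ 2 * G * ‖w‖ ^ (2 * n) := rfl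
              _ ≤ (min (‖w‖ - a) (b - ‖w‖)) ^ 2 * G * ‖w‖ ^ (2 * n) :=
                  mul_le_mul_of_nonneg_right (mul_le_mul_of_nonneg_right hsq hGnn) hW
              _ = G * ((min (‖w‖ - a) (b - ‖w‖)) ^ 2 * ‖w‖ ^ (2 * n)) := by
                  rw [hnorm]; ring
              _ = G * F1 ‖w‖ := rfl
          · have hfr : (z, w) ∈ frontier Ω := ⟨hSK hwS, fun hi => hwΩ (interior_subset hi)⟩
            have hz0 := aux_d_zero Ω (z, w) hfr
            have : I1 (z, w) = 0 := by
              rw [hI1def]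
              simp only
              rw [hz0]
              ring
            rw [this]
            exact mul_nonneg hGnn (Set.indicator_nonneg
              (fun r hr => hF1nn r (lt_trans ha0 hr.1).le) _)
        · rw [Set.indicator_of_notMem hwS]
          exact mul_nonneg hGnn (Set.indicator_nonneg
            (fun r hr => hF1nn r (lt_trans ha0 hr.1).le) _)
      calc ∫ w : ℂ, S.indicator I1 (z, w)
          ≤ ∫ w : ℂ, G * ((Ioo a b).indicator F1 ‖w‖) :=
            integral_mono hE1 (hF1int.const_mul G) hptw1
        _ = G * ∫ w : ℂ, (Ioo a b).indicator F1 ‖w‖ := integral_const_mul G _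
        _ ≤ G * ((5 * (R + 1) ^ 2 / (n:ℝ) ^ 2) * ∫ w : ℂ, (Ioo a b).indicator F2 ‖w‖) :=
            mul_le_mul_of_nonneg_left (aux_annulus R hR1 n hn a b ha0 hab hbR) hGnn
        _ = (5 * (R + 1) ^ 2 / (n:ℝ) ^ 2) * ∫ w : ℂ, G * ((Ioo a b).indicator F2 ‖w‖) := by
            rw [integral_const_mul]
            ring
        _ ≤ (5 * (R + 1) ^ 2 / (n:ℝ) ^ 2) * ∫ w : ℂ, S.indicator I2 (z, w) := by
            apply mul_le_mul_of_nonneg_left _ (by positivity)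
            apply integral_mono (hF2int.const_mul G) hE2
            intro w
            show G * ((Ioo a b).indicator F2 ‖w‖) ≤ S.indicator I2 (z, w)
            by_cases hio : ‖w‖ ∈ Ioo a b
            · have hwΩ : (z, w) ∈ Ω := by
                refine ⟨hzD, ?_, ?_⟩ <;> simp only <;>
                  [exact hio.1; exact hio.2]
              rw [Set.indicator_of_mem hio, Set.indicator_of_mem (hΩsubS hwΩ)]
            · rw [Set.indicator_of_notMem hio, mul_zero]
              exact Set.indicator_nonneg (fun p _ => hI2nn _) _
    · -- z ∉ D : the inner integral on the left vanishes
      have hzero : ∀ w : ℂ, S.indicator I1 (z, w) = 0 := by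
        intro w
        by_cases hwS : (z, w) ∈ S
        · have hwΩ : (z, w) ∉ Ω := fun h => hzD h.1
          have hfr : (z, w) ∈ frontier Ω := ⟨hSK hwS, fun hi => hwΩ (interior_subset hi)⟩
          rw [Set.indicator_of_mem hwS]
          have hz0 := aux_d_zero Ω (z, w) hfr
          rw [hI1def]
          simp only
          rw [hz0]
          ring
        · exact Set.indicator_of_notMem hwS _
      have hL0 : ∫ w : ℂ, S.indicator I1 (z, w) = 0 := by
        have : (fun w : ℂ => S.indicator I1 (z, w)) = fun _ => (0:ℝ) := funext hzero
        rw [this, integral_zero]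
      rw [hL0]
      apply mul_nonneg (by positivity)
      exact integral_nonneg fun w => Set.indicator_nonneg (fun p _ => hI2nn _) _
  -- put everything together
  calc ∫ p in S, I1 p = ∫ z : ℂ, ∫ w : ℂ, S.indicator I1 (z, w) := hFub1
    _ ≤ ∫ z : ℂ, (5 * (R + 1) ^ 2 / (n:ℝ) ^ 2) * ∫ w : ℂ, S.indicator I2 (z, w) :=
        integral_mono_ae hind1.integral_prod_left
          ((hind2.integral_prod_left).const_mul _) hae
    _ = (5 * (R + 1) ^ 2 / (n:ℝ) ^ 2) * ∫ z : ℂ, ∫ w : ℂ, S.indicator I2 (z, w) :=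
        integral_const_mul _ _
    _ = (5 * (R + 1) ^ 2 / (n:ℝ) ^ 2) * ∫ p in S, I2 p := by rw [hFub2]
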